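/- Over the local ring ℂ[x,y]_{(x,y)}, let Q be the cokernel of the map 𝒪⁴ → 𝒪² given by the matrix P = [[x,y,0,0],[0,0,x,y]]. Then Q ≅ (ℂ[x,y]/(x,y))² has length 2 as an 𝒪-module, and for any deformation given by the matrix P̃ = [[x+z₁, y+z₂, z₃, z₄],[z₅, z₆, x+z₇, y+z₈]] with parameters z_i, the generators q₁, q₂ of the cokernel satisfy the syzygies obtained by eliminating x, y: specifically the relations (z₃z₆−z₄z₅)q₁ + (z₂z₅+z₆z₇−z₁z₆−z₅z₈)q₂ = 0 and (z₁z₄+z₃z₈−z₂z₃−z₄z₇)q₁ + (z₄z₅−z₃z₆)q₂ = 0 hold in the cokernel. -/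

import Mathlib

open MvPolynomial Matrix

/-- The maximal ideal `(x, y)` of `ℂ[x,y]` (with `x = X 0`, `y = X 1`). -/
noncomputable def mxy : Ideal (MvPolynomial (Fin 2) ℂ) := Ideal.span {X 0, X 1}

set_option maxHeartbeats 1000000 in
/-- Part (a): over the local ring `𝒪 = ℂ[x,y]_{(x,y)}`, the cokernel `Q` of the map
`𝒪⁴ → 𝒪²` given by `P = [[x,y,0,0],[0,0,x,y]]` is isomorphic to `(𝒪/(x,y)𝒪)² ≅
(ℂ[x,y]/(x,y))²` and has length 2 (it has a simple submodule with simple quotient).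
Part (b): in the cokernel of any deformed matrix
`P̃ = [[x+z₁, y+z₂, z₃, z₄],[z₅, z₆, x+z₇, y+z₈]]`, i.e. for any module `M` with elements
`q₁, q₂` satisfying the four column relations, the two syzygies obtained by eliminating
`x` and `y` hold. -/
theorem cokernel_length_two_and_syzygies (hm : mxy.IsPrime) :
    (let O := Localization (@Ideal.primeCompl _ _ mxy hm)
     let x : O := algebraMap (MvPolynomial (Fin 2) ℂ) O (X 0)
     let y : O := algebraMap (MvPolynomial (Fin 2) ℂ) O (X 1)
     let P : Matrix (Fin 2) (Fin 4) O := !![x, y, 0, 0; 0, 0, x, y]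
     let Q := (Fin 2 → O) ⧸ LinearMap.range P.mulVecLin
     Nonempty
        (Q ≃ₗ[O] (Fin 2 → O ⧸ mxy.map (algebraMap (MvPolynomial (Fin 2) ℂ) O))) ∧
      ∃ N : Submodule O Q, IsSimpleModule O N ∧ IsSimpleModule O (Q ⧸ N)) ∧
    (∀ (R : Type) (_ : CommRing R) (M : Type) (_ : AddCommGroup M) (_ : Module R M)
        (x y z₁ z₂ z₃ z₄ z₅ z₆ z₇ z₈ : R) (q₁ q₂ : M),
      x • q₁ = -(z₁ • q₁) - z₅ • q₂ →
      y • q₁ = -(z₂ • q₁) - z₆ • q₂ →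
      x • q₂ = -(z₃ • q₁) - z₇ • q₂ →
      y • q₂ = -(z₄ • q₁) - z₈ • q₂ →
      (z₃ * z₆ - z₄ * z₅) • q₁ + (z₂ * z₅ + z₆ * z₇ - z₁ * z₆ - z₅ * z₈) • q₂ = 0 ∧
      (z₁ * z₄ + z₃ * z₈ - z₂ * z₃ - z₄ * z₇) • q₁ + (z₄ * z₅ - z₃ * z₆) • q₂ = 0) := by
  constructor
  · haveI := hm
    intro O x y P Q
    set J : Ideal O := mxy.map (algebraMap (MvPolynomial (Fin 2) ℂ) O) with hJdef
    have hJmax : J.IsMaximal := by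
      rw [hJdef, Localization.AtPrime.map_eq_maximalIdeal]
      exact IsLocalRing.maximalIdeal.isMaximal _
    have hJspan : J = Ideal.span {x, y} := by
      have h2 : Ideal.map (algebraMap (MvPolynomial (Fin 2) ℂ) O) (Ideal.span {X 0, X 1})
          = Ideal.span ({x, y} : Set O) := by
        rw [Ideal.map_span]
        congr 1
        simp [Set.image_insert_eq]
        rfl
      exact h2
    have hxJ : x ∈ J := by rw [hJspan]; exact Ideal.subset_span (by simp)
    have hyJ : y ∈ J := by rw [hJspan]; exact Ideal.subset_span (by simp)
    have hrange : LinearMap.range P.mulVecLin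
        = Submodule.pi Set.univ (fun _ : Fin 2 => (J : Submodule O O)) := by
      rw [Matrix.range_mulVecLin]
      apply le_antisymm
      · rw [Submodule.span_le]
        rintro _ ⟨i, rfl⟩
        simp only [SetLike.mem_coe, Submodule.mem_pi]
        intro j _
        fin_cases i <;> fin_cases j <;>
          simp [P, Matrix.transpose_apply, hxJ, hyJ]
      · intro w hw
        rw [Submodule.mem_pi] at hw
        obtain ⟨a, b, hab⟩ := Ideal.mem_span_pair.mp (hJspan ▸ hw 0 (Set.mem_univ 0))
        obtain ⟨c, d, hcd⟩ := Ideal.mem_span_pair.mp (hJspan ▸ hw 1 (Set.mem_univ 1))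
        have hw' : w = a • Pᵀ 0 + b • Pᵀ 1 + c • Pᵀ 2 + d • Pᵀ 3 := by
          funext j
          simp only [Pi.add_apply, Pi.smul_apply, Matrix.transpose_apply, smul_eq_mul]
          fin_cases j
          · show w 0 = _
            simp [P]
            linear_combination -hab
          · show w 1 = _
            simp [P]
            linear_combination -hcd
        rw [hw']
        exact add_mem (add_mem (add_mem
          (Submodule.smul_mem _ _ (Submodule.subset_span ⟨0, rfl⟩))
          (Submodule.smul_mem _ _ (Submodule.subset_span ⟨1, rfl⟩)))
          (Submodule.smul_mem _ _ (Submodule.subset_span ⟨2, rfl⟩)))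
          (Submodule.smul_mem _ _ (Submodule.subset_span ⟨3, rfl⟩))
    let E : Q ≃ₗ[O] (Fin 2 → O ⧸ J) :=
      (Submodule.quotEquivOfEq _ _ hrange).trans
        (Submodule.quotientPi (fun _ : Fin 2 => (J : Submodule O O)))
    refine ⟨⟨E⟩, ?_⟩
    have hK : IsSimpleModule O (O ⧸ J) :=
      isSimpleModule_iff_quot_maximal.mpr ⟨J, hJmax, ⟨LinearEquiv.refl _ _⟩⟩
    set π : (Fin 2 → O ⧸ J) →ₗ[O] (O ⧸ J) := LinearMap.proj 1 with hπ
    have hπsurj : Function.Surjective π := fun c => ⟨fun _ => c, rfl⟩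
    set N' : Submodule O (Fin 2 → O ⧸ J) := LinearMap.ker π with hN'
    have hmap : (N'.comap E.toLinearMap).map E.toLinearMap = N' :=
      Submodule.map_comap_eq_of_surjective E.surjective _
    refine ⟨N'.comap E.toLinearMap, ?_, ?_⟩
    · let e1 := E.submoduleMap (N'.comap E.toLinearMap)
      let e2 : ((N'.comap E.toLinearMap).map E.toLinearMap : Submodule O (Fin 2 → O ⧸ J)) ≃ₗ[O] N' :=
        LinearEquiv.ofEq _ _ hmap
      let f : N' →ₗ[O] (O ⧸ J) := (LinearMap.proj 0).comp N'.subtype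
      have hf : Function.Bijective f := by
        constructor
        · intro v w hvw
          have hv : π (v : Fin 2 → O ⧸ J) = 0 := v.2
          have hw : π (w : Fin 2 → O ⧸ J) = 0 := w.2
          ext j
          fin_cases j
          · exact hvw
          · show (v : Fin 2 → O ⧸ J) 1 = (w : Fin 2 → O ⧸ J) 1
            calc (v : Fin 2 → O ⧸ J) 1 = π (v : Fin 2 → O ⧸ J) := rfl
              _ = π (w : Fin 2 → O ⧸ J) := by rw [hv, hw]
              _ = (w : Fin 2 → O ⧸ J) 1 := rfl
        · intro c
          refine ⟨⟨fun j => if j = 0 then c else 0, ?_⟩, ?_⟩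
          · show π _ = 0
            simp [hπ]
          · simp [f]
      haveI := hK
      exact IsSimpleModule.congr ((e1.trans e2).trans (LinearEquiv.ofBijective f hf))
    · let e3 := Submodule.Quotient.equiv (N'.comap E.toLinearMap) N' E hmap
      let e4 := π.quotKerEquivOfSurjective hπsurj
      haveI := hK
      exact IsSimpleModule.congr (e3.trans e4)
  · intro R _ M _ _ x y z₁ z₂ z₃ z₄ z₅ z₆ z₇ z₈ q₁ q₂ h1 h2 h3 h4
    have e1 : x • (y • q₁) = y • (x • q₁) := by rw [smul_smul, smul_smul, mul_comm]
    have e2 : x • (y • q₂) = y • (x • q₂) := by rw [smul_smul, smul_smul, mul_comm]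
    rw [h2, h1, smul_sub, smul_sub, smul_neg, smul_neg, smul_comm x z₂, smul_comm x z₆,
      smul_comm y z₁, smul_comm y z₅, h1, h2, h3, h4] at e1
    rw [h4, h3, smul_sub, smul_sub, smul_neg, smul_neg, smul_comm x z₄, smul_comm x z₈,
      smul_comm y z₃, smul_comm y z₇, h1, h2, h3, h4] at e2
    constructor
    · linear_combination (norm := module) e1
    · linear_combination (norm := module) e2
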